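/- Let R be an integral domain. Then every nonzero principal ideal of R is an IP*-set in the additive group (R, +) if and only if every nonzero ideal of R has finite (additive) index in R. -/

import Mathlib

open Finset

section Aux

variable {R : Type*} [CommRing R]

/-- Sum of an initial segment of a stream is a finite sum. -/
lemma sum_range_mem_FS (k : ℕ) (y : Stream' R) :
    ∑ i ∈ Finset.range (k + 1), y.get i ∈ Hindman.FS y := by
  induction k generalizing y with
  | zero => simpa using Hindman.FS.head y
  | succ k ih =>
    rw [Finset.sum_range_succ']
    have h := ih y.tail
    have : ∑ i ∈ Finset.range (k + 1), y.get (i + 1) ∈ Hindman.FS y.tail := by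
      simpa [Stream'.get_tail] using h
    simpa [add_comm] using Hindman.FS.cons y _ this

lemma exists_avoid (I : Ideal R) (hinf : Infinite (R ⧸ I)) (T : Finset R) :
    ∃ y : R, ∀ c ∈ T, y + c ∉ I := by
  classical
  obtain ⟨q, hq⟩ := (T.image (fun c => -(Ideal.Quotient.mk I c))).exists_notMem
  obtain ⟨y, rfl⟩ := Ideal.Quotient.mk_surjective q
  refine ⟨y, fun c hc hmem => hq ?_⟩
  rw [Finset.mem_image]
  refine ⟨c, hc, ?_⟩
  have : Ideal.Quotient.mk I (y + c) = 0 := (Ideal.Quotient.eq_zero_iff_mem).2 hmem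
  rw [map_add] at this
  exact neg_eq_of_add_eq_zero_left this

/-- If `R ⧸ I` is infinite, there is a sequence all of whose finite sums avoid `I`. -/
lemma exists_seq_avoid (I : Ideal R) (hinf : Infinite (R ⧸ I)) :
    ∃ x : ℕ → R, ∀ s : Finset ℕ, s.Nonempty → ∑ i ∈ s, x i ∉ I := by
  classical
  -- h n : the finite set of all subset-sums of x_0, ..., x_{n-1} (including 0)
  let c : Finset R → R := fun T => (exists_avoid I hinf T).choose
  have hc : ∀ T : Finset R, ∀ t ∈ T, c T + t ∉ I := fun T => (exists_avoid I hinf T).choose_spec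
  let h : ℕ → Finset R := fun n => Nat.rec ({0} : Finset R)
    (fun _ T => T ∪ T.image (fun t => c T + t)) n
  have h_zero : h 0 = {0} := rfl
  have h_succ : ∀ n, h (n + 1) = h n ∪ (h n).image (fun t => c (h n) + t) := fun n => rfl
  set x : ℕ → R := fun n => c (h n) with hx
  have h_zero_mem : ∀ n, (0 : R) ∈ h n := by
    intro n
    induction n with
    | zero => simp [h_zero]
    | succ n ih => rw [h_succ]; exact Finset.mem_union_left _ ih
  have h_mono : ∀ m n, m ≤ n → h m ⊆ h n := by
    intro m n hmn
    induction n with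
    | zero => simp [Nat.le_zero.1 hmn]
    | succ n ih =>
      rcases Nat.lt_or_ge m (n + 1) with hl | hg
      · rw [h_succ]; exact (ih (Nat.lt_succ_iff.1 hl)).trans (Finset.subset_union_left)
      · have : m = n + 1 := le_antisymm hmn hg
        subst this; rfl
  have key : ∀ n, ∀ s : Finset ℕ, (∀ i ∈ s, i < n) → ∑ i ∈ s, x i ∈ h n := by
    intro n
    induction n with
    | zero =>
      intro s hs
      have : s = ∅ := Finset.eq_empty_of_forall_notMem (fun i hi => Nat.not_lt_zero i (hs i hi))
      simp [this, h_zero]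
    | succ n ih =>
      intro s hs
      by_cases hn : n ∈ s
      · have hsub : ∀ i ∈ s.erase n, i < n := by
          intro i hi
          have := hs i (Finset.mem_of_mem_erase hi)
          have hne := Finset.ne_of_mem_erase hi
          omega
        have hsum : ∑ i ∈ s.erase n, x i ∈ h n := ih _ hsub
        have : ∑ i ∈ s, x i = x n + ∑ i ∈ s.erase n, x i := by
          rw [← Finset.add_sum_erase _ _ hn]
        rw [this, h_succ]
        exact Finset.mem_union_right _ (Finset.mem_image_of_mem _ hsum)
      · have : ∀ i ∈ s, i < n := by
          intro i hi
          have := hs i hi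
          have : i ≠ n := fun h => hn (h ▸ hi)
          omega
        exact h_mono n (n + 1) (Nat.le_succ n) (ih s this)
  refine ⟨x, fun s hs hmem => ?_⟩
  set n := s.max' hs with hn
  have hns : n ∈ s := s.max'_mem hs
  have hsub : ∀ i ∈ s.erase n, i < n := by
    intro i hi
    have h1 := s.le_max' i (Finset.mem_of_mem_erase hi)
    have h2 := Finset.ne_of_mem_erase hi
    omega
  have hsum : ∑ i ∈ s.erase n, x i ∈ h n := key n _ hsub
  have heq : ∑ i ∈ s, x i = x n + ∑ i ∈ s.erase n, x i := by
    rw [← Finset.add_sum_erase _ _ hns]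
  exact hc (h n) _ hsum (heq ▸ hmem)

/-- Every element of `FS a` is a sum over a nonempty finite index set. -/
lemma FS_eq_sum {a : Stream' R} {z : R} (hz : z ∈ Hindman.FS a) :
    ∃ s : Finset ℕ, s.Nonempty ∧ z = ∑ i ∈ s, a.get i := by
  classical
  induction hz with
  | head' a => exact ⟨{0}, ⟨0, by simp⟩, by simp [Stream'.head]⟩
  | tail' a m h ih =>
    obtain ⟨s, hs, rfl⟩ := ih
    refine ⟨s.image (· + 1), hs.image _, ?_⟩
    rw [Finset.sum_image (by intro x _ y _ hxy; simpa using hxy)]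
    simp [Stream'.get_tail]
  | cons' a m h ih =>
    obtain ⟨s, hs, rfl⟩ := ih
    refine ⟨insert 0 (s.image (· + 1)), ⟨0, Finset.mem_insert_self _ _⟩, ?_⟩
    rw [Finset.sum_insert (by simp)]
    rw [Finset.sum_image (by intro x _ y _ hxy; simpa using hxy)]
    simp [Stream'.get_tail, Stream'.head]

end Aux

/-- In an integral domain `R`, every nonzero principal ideal is an `IP⋆`-set in `(R,+)`
if and only if every nonzero ideal of `R` has finite (additive) index. -/
theorem stmt_4 (R : Type*) [CommRing R] [IsDomain R] :
    (∀ a : R, a ≠ 0 → ∀ x : Stream' R, ∃ s ∈ Hindman.FS x,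
        s ∈ (Ideal.span ({a} : Set R) : Set R)) ↔
    (∀ I : Ideal R, I ≠ ⊥ → Finite (R ⧸ I)) := by
  constructor
  · intro H I hI
    obtain ⟨a, haI, ha⟩ := Submodule.exists_mem_ne_zero_of_ne_bot hI
    -- It suffices that R ⧸ span {a} is finite, since span {a} ≤ I
    by_contra hfin
    have hinf : Infinite (R ⧸ I) := not_finite_iff_infinite.mp hfin
    obtain ⟨x, hx⟩ := exists_seq_avoid I hinf
    obtain ⟨z, hzFS, hzI⟩ := H a ha x
    obtain ⟨s, hs, rfl⟩ := FS_eq_sum hzFS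
    have hspan : Ideal.span ({a} : Set R) ≤ I := by
      rw [Ideal.span_le, Set.singleton_subset_iff]; exact haI
    exact hx s hs (hspan hzI)
  · intro H a ha x
    set I := Ideal.span ({a} : Set R) with hI
    have hIne : I ≠ ⊥ := by
      rw [hI, Ne, Ideal.span_singleton_eq_bot]; exact ha
    have : Finite (R ⧸ I) := H I hIne
    -- partial sums: pigeonhole
    obtain ⟨m, n, hmn, heq⟩ := Finite.exists_ne_map_eq_of_infinite
      (fun k : ℕ => Ideal.Quotient.mk I (∑ i ∈ Finset.range k, x.get i))
    wlog hlt : m < n generalizing m n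
    · exact this n m hmn.symm heq.symm (by omega)
    have hdiff : (∑ i ∈ Finset.range n, x.get i) - (∑ i ∈ Finset.range m, x.get i) ∈ I := by
      rw [← Ideal.Quotient.eq_zero_iff_mem, map_sub, heq, sub_self]
    have hico : (∑ i ∈ Finset.range n, x.get i) - (∑ i ∈ Finset.range m, x.get i)
        = ∑ i ∈ Finset.Ico m n, x.get i := by
      rw [Finset.sum_Ico_eq_sub _ (le_of_lt hlt)]
    rw [hico] at hdiff
    have hrw : ∑ i ∈ Finset.Ico m n, x.get i
        = ∑ i ∈ Finset.range (n - m), (x.drop m).get i := by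
      rw [Finset.sum_Ico_eq_sum_range]
      apply Finset.sum_congr rfl
      intro i _
      rw [Stream'.get_drop]
    obtain ⟨k, hk⟩ : ∃ k, n - m = k + 1 := ⟨n - m - 1, by omega⟩
    refine ⟨∑ i ∈ Finset.Ico m n, x.get i, ?_, hdiff⟩
    rw [hrw, hk]
    exact Hindman.FS_iter_tail_sub_FS x m (sum_range_mem_FS k _)
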